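/- For all p01, x with 0 ≤ p01 ≤ 1 and 0 ≤ x ≤ 1 - p01, and all integers L ≥ 0: h(p01) := -p01·L·x^{L+2} + p01·(L+1)·x^{L+1} - x² - p01·x + 2x - 1 ≤ 0. -/
import Mathlib

lemma key13 (x : ℝ) (h3 : 0 ≤ x) (hx1 : x ≤ 1) (L : ℕ) :
    ((L : ℝ) + 1) * x ^ L - (L : ℝ) * x ^ (L + 1) ≤ 1 := by
  induction L with
  | zero => simp
  | succ L ih =>
    have hxL : x ^ (L + 1) ≤ 1 := pow_le_one₀ h3 hx1
    have hxL' : 0 ≤ x ^ L := pow_nonneg h3 L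
    have step : x * (((L : ℝ) + 1) * x ^ L - (L : ℝ) * x ^ (L + 1)) ≤ x * 1 :=
      mul_le_mul_of_nonneg_left ih h3
    have h2 : x ^ (L + 1) * (1 - x) ≤ 1 - x := by
      nlinarith
    push_cast
    have e1 : x ^ (L + 1) = x ^ L * x := pow_succ x L
    have e2 : x ^ (L + 2) = x ^ (L + 1) * x := pow_succ x (L + 1)
    nlinarith [step, h2]

theorem stmt13 (p01 x : ℝ) (h1 : 0 ≤ p01) (h2 : p01 ≤ 1) (h3 : 0 ≤ x) (h4 : x ≤ 1 - p01)
    (L : ℕ) :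
    -p01 * (L : ℝ) * x ^ (L + 2) + p01 * ((L : ℝ) + 1) * x ^ (L + 1)
      - x ^ 2 - p01 * x + 2 * x - 1 ≤ 0 := by
  have hx1 : x ≤ 1 := by linarith
  have hk := key13 x h3 hx1 L
  have h5 : 0 ≤ p01 * x * (1 - (((L : ℝ) + 1) * x ^ L - (L : ℝ) * x ^ (L + 1))) :=
    mul_nonneg (mul_nonneg h1 h3) (by linarith)
  have e1 : x ^ (L + 1) = x ^ L * x := pow_succ x L
  have e2 : x ^ (L + 2) = x ^ (L + 1) * x := pow_succ x (L + 1)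
  rw [e1] at h5
  rw [e2, e1]
  nlinarith [h5, sq_nonneg (1 - x)]
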